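/- K(a) = c_ECH(a) for every real number a > 1. -/

import Mathlib

open scoped Classical

/-- Number of lattice points `(x, y) ∈ ℕ²` with `x + a·y ≤ A + a·B`, i.e. the
number of lattice points in the triangle `T^a_{A,B}`. -/
noncomputable def latticeCount (a : ℝ) (A B : ℕ) : ℕ :=
  Set.ncard {p : ℕ × ℕ | (p.1 : ℝ) + a * (p.2 : ℝ) ≤ (A : ℝ) + a * (B : ℝ)}

/-- The smallest positive integer `d` with `latticeCount a A B ≤ (d+1)(d+2)/2`. -/
noncomputable def dAB (a : ℝ) (A B : ℕ) : ℕ :=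
  sInf {d : ℕ | 0 < d ∧ 2 * latticeCount a A B ≤ (d + 1) * (d + 2)}

/-- `k_{A,B}(a) = (A + B·a) / d_{A,B}(a)`. -/
noncomputable def kAB (a : ℝ) (A B : ℕ) : ℝ :=
  ((A : ℝ) + (B : ℝ) * a) / (dAB a A B : ℝ)

/-- `K(a)` for irrational `a`: the supremum of `k_{A,B}(a)` over all `A, B ≥ 0`. -/
noncomputable def Kirr (a : ℝ) : ℝ :=
  ⨆ p : ℕ × ℕ, kAB a p.1 p.2

/-- The capacity function `K`: for irrational `a` it is `Kirr a`; for rational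
`a` it is the supremum of `Kirr z` over irrational `z` with `1 < z < a`. -/
noncomputable def Kcap (a : ℝ) : ℝ :=
  if Irrational a then Kirr a
  else sSup {x : ℝ | ∃ z : ℝ, Irrational z ∧ 1 < z ∧ z < a ∧ x = Kirr z}

/-- The `k`-th term (indexed from `0`) of the nondecreasing sequence `N(a,b)`
listing, with multiplicities, all numbers `m·a + n·b` with `m, n ∈ ℕ`:
it is the infimum of all `t` such that at least `k+1` pairs `(m,n)` satisfy
`m·a + n·b ≤ t`. -/
noncomputable def Nseq (a b : ℝ) (k : ℕ) : ℝ :=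
  sInf {t : ℝ | k + 1 ≤ Set.ncard {p : ℕ × ℕ | (p.1 : ℝ) * a + (p.2 : ℝ) * b ≤ t}}

/-- `c_ECH(a) = inf {μ > 0 | N(1,a) ≼ N(μ,μ)}`. -/
noncomputable def cECH (a : ℝ) : ℝ :=
  sInf {μ : ℝ | 0 < μ ∧ ∀ k : ℕ, Nseq 1 a k ≤ Nseq μ μ k}

namespace LP

def Sset (a b t : ℝ) : Set (ℕ × ℕ) := {p | (p.1 : ℝ) * a + (p.2 : ℝ) * b ≤ t}

noncomputable def Fc (a b t : ℝ) : ℕ := (Sset a b t).ncard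

lemma Sset_finite {a b : ℝ} (ha : 1 ≤ a) (hb : 1 ≤ b) (t : ℝ) : (Sset a b t).Finite := by
  apply Set.Finite.subset (Set.finite_Icc ((0:ℕ),(0:ℕ)) (Nat.floor t, Nat.floor t))
  rintro ⟨m, n⟩ hp
  simp only [Sset, Set.mem_setOf_eq] at hp
  have hm : (m : ℝ) ≤ t := by nlinarith [Nat.cast_nonneg (α := ℝ) m, Nat.cast_nonneg (α := ℝ) n]
  have hn : (n : ℝ) ≤ t := by nlinarith [Nat.cast_nonneg (α := ℝ) m, Nat.cast_nonneg (α := ℝ) n]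
  simp [Set.mem_Icc, Prod.le_def, Nat.le_floor hm, Nat.le_floor hn]

lemma Fc_mono {a b : ℝ} (ha : 1 ≤ a) (hb : 1 ≤ b) {s t : ℝ} (hst : s ≤ t) :
    Fc a b s ≤ Fc a b t := by
  apply Set.ncard_le_ncard _ (Sset_finite ha hb t)
  intro p hp; exact le_trans hp hst

def Tset (a b : ℝ) (k : ℕ) : Set ℝ := {t | k + 1 ≤ Fc a b t}

lemma Nseq_eq (a b : ℝ) (k : ℕ) : Nseq a b k = sInf (Tset a b k) := rfl

lemma Tset_subset_Ici {a b : ℝ} (ha : 0 ≤ a) (hb : 0 ≤ b) (k : ℕ) :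
    Tset a b k ⊆ Set.Ici (0:ℝ) := by
  intro t ht
  by_contra h
  simp only [Set.mem_Ici, not_le] at h
  have : Sset a b t = ∅ := by
    ext p; simp only [Sset, Set.mem_setOf_eq, Set.mem_empty_iff_false, iff_false, not_le]
    calc t < 0 := h
    _ ≤ (p.1 : ℝ) * a + (p.2 : ℝ) * b := by positivity
  have : Fc a b t = 0 := by simp [Fc, this]
  simp only [Tset, Set.mem_setOf_eq, this, Nat.le_zero] at ht
  omega

lemma Tset_bddBelow {a b : ℝ} (ha : 0 ≤ a) (hb : 0 ≤ b) (k : ℕ) : BddBelow (Tset a b k) :=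
  ⟨0, fun t ht => Tset_subset_Ici ha hb k ht⟩

lemma Tset_upward {a b : ℝ} (ha : 1 ≤ a) (hb : 1 ≤ b) {k : ℕ} {s t : ℝ} (hs : s ∈ Tset a b k)
    (hst : s ≤ t) : t ∈ Tset a b k :=
  le_trans hs (Fc_mono ha hb hst)

lemma Tset_nonempty {a b : ℝ} (ha : 1 ≤ a) (hb : 1 ≤ b) (k : ℕ) :
    ((k : ℝ) * a) ∈ Tset a b k := by
  have hsub : ((fun i => (i, (0:ℕ))) '' Set.Iic k) ⊆ Sset a b ((k:ℝ) * a) := by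
    rintro ⟨m, n⟩ ⟨i, hi, hieq⟩
    obtain ⟨rfl, rfl⟩ : i = m ∧ (0:ℕ) = n := by
      simpa [Prod.ext_iff] using hieq
    simp only [Sset, Set.mem_setOf_eq, Nat.cast_zero, zero_mul, add_zero]
    have : (i:ℝ) ≤ (k:ℝ) := by exact_mod_cast hi
    nlinarith
  have hinj : Function.Injective (fun i : ℕ => (i, (0:ℕ))) := by
    intro x y h; simpa [Prod.ext_iff] using h
  have h1 : ((fun i => (i, (0:ℕ))) '' Set.Iic k).ncard = k + 1 := by
    rw [Set.ncard_image_of_injective _ hinj]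
    rw [← Finset.coe_Iic, Set.ncard_coe_finset, Nat.card_Iic]
  have := Set.ncard_le_ncard hsub (Sset_finite ha hb _)
  simp only [Tset, Set.mem_setOf_eq, Fc]
  omega

def vfun (a b : ℝ) (p : ℕ × ℕ) : ℝ := (p.1 : ℝ) * a + (p.2 : ℝ) * b

lemma mem_Sset_iff {a b t : ℝ} {p : ℕ × ℕ} : p ∈ Sset a b t ↔ vfun a b p ≤ t := Iff.rfl

/-- Key order-statistic lemma. -/
lemma Nseq_spec {a b : ℝ} (ha : 1 ≤ a) (hb : 1 ≤ b) (k : ℕ) :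
    Nseq a b k ∈ Tset a b k ∧ (∃ p : ℕ × ℕ, vfun a b p = Nseq a b k) := by
  set T := Tset a b k with hT
  have hbdd : BddBelow T := Tset_bddBelow (le_trans zero_le_one ha) (le_trans zero_le_one hb) k
  have hne : T.Nonempty := ⟨_, Tset_nonempty ha hb k⟩
  -- step (i): every element of T dominates an element of T which is a value
  have step1 : ∀ t ∈ T, ∃ w ∈ T, w ≤ t ∧ ∃ p ∈ Sset a b t, vfun a b p = w := by
    intro t ht
    have hfin : (Sset a b t).Finite := Sset_finite ha hb t
    have hSne : (Sset a b t).Nonempty := by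
      rw [Set.nonempty_iff_ne_empty]
      intro h
      have : Fc a b t = 0 := by simp [Fc, h]
      simp only [hT, Tset, Set.mem_setOf_eq, this] at ht
      omega
    obtain ⟨p, hp, hmax⟩ := Set.Finite.exists_maximalFor (vfun a b) _ hfin hSne
    refine ⟨vfun a b p, ?_, hp, p, hp, rfl⟩
    have hsub : Sset a b t ⊆ Sset a b (vfun a b p) := by
      intro q hq
      rcases le_or_gt (vfun a b q) (vfun a b p) with h | h
      · exact h
      · exact hmax hq h.le
    have := Set.ncard_le_ncard hsub (Sset_finite ha hb _)
    simp only [hT, Tset, Set.mem_setOf_eq, Fc] at ht ⊢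
    omega
  -- the witness t₁ and set of candidate values
  obtain ⟨t₁, ht₁⟩ := id hne
  set W := {w : ℝ | w ∈ T ∧ w ≤ t₁ ∧ ∃ p, vfun a b p = w} with hW
  have hWfin : W.Finite := by
    apply Set.Finite.subset ((Sset_finite ha hb t₁).image (vfun a b))
    rintro w ⟨hwT, hwle, p, hp⟩
    exact ⟨p, by rw [mem_Sset_iff, hp]; exact hwle, hp⟩
  have hWne : W.Nonempty := by
    obtain ⟨w, hwT, hwle, p, hpS, hpv⟩ := step1 t₁ ht₁
    exact ⟨w, hwT, hwle, p, hpv⟩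
  obtain ⟨w₀, hw₀, hmin⟩ := Set.Finite.exists_minimalFor id _ hWfin hWne
  have hlb : ∀ t ∈ T, w₀ ≤ t := by
    intro t ht
    rcases le_or_gt t₁ t with h | h
    · exact le_trans hw₀.2.1 h
    · obtain ⟨w, hwT, hwle, p, hpS, hpv⟩ := step1 t ht
      have hwW : w ∈ W := ⟨hwT, le_trans hwle h.le, p, hpv⟩
      rcases le_or_gt w₀ w with h2 | h2
      · exact le_trans h2 hwle
      · exact absurd (hmin hwW h2.le) (by intro he; simp only [id] at he; linarith)
  have heq : sInf T = w₀ := le_antisymm (csInf_le hbdd hw₀.1) (le_csInf hne hlb)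
  rw [Nseq_eq, ← hT, heq]
  exact ⟨hw₀.1, hw₀.2.2⟩

lemma Nseq_mem {a b : ℝ} (ha : 1 ≤ a) (hb : 1 ≤ b) (k : ℕ) :
    k + 1 ≤ Fc a b (Nseq a b k) := (Nseq_spec ha hb k).1

lemma Nseq_nonneg {a b : ℝ} (ha : 1 ≤ a) (hb : 1 ≤ b) (k : ℕ) : 0 ≤ Nseq a b k :=
  Tset_subset_Ici (le_trans zero_le_one ha) (le_trans zero_le_one hb) k (Nseq_spec ha hb k).1

lemma Fc_le_of_lt_Nseq {a b : ℝ} (ha : 1 ≤ a) (hb : 1 ≤ b) {k : ℕ} {s : ℝ}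
    (hs : s < Nseq a b k) : Fc a b s ≤ k := by
  by_contra h
  push_neg at h
  have : s ∈ Tset a b k := h
  have := csInf_le (Tset_bddBelow (by linarith) (by linarith) k) this
  rw [Nseq_eq] at hs
  linarith

lemma le_Nseq_of_lb {a b : ℝ} (ha : 1 ≤ a) (hb : 1 ≤ b) {k : ℕ} {c : ℝ}
    (h : ∀ t ∈ Tset a b k, c ≤ t) : c ≤ Nseq a b k :=
  le_csInf ⟨_, Tset_nonempty ha hb k⟩ h

lemma Nseq_le_of_mem {a b : ℝ} (ha : 1 ≤ a) (hb : 1 ≤ b) {k : ℕ} {t : ℝ}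
    (h : t ∈ Tset a b k) : Nseq a b k ≤ t :=
  csInf_le (Tset_bddBelow (by linarith) (by linarith) k) h

lemma Tset_eq_Ici {a b : ℝ} (ha : 1 ≤ a) (hb : 1 ≤ b) (k : ℕ) :
    Tset a b k = Set.Ici (Nseq a b k) := by
  ext t
  constructor
  · exact fun h => Nseq_le_of_mem ha hb h
  · intro h
    exact Tset_upward ha hb (Nseq_mem ha hb k) h

lemma Nseq_mono_coeff {a b a' b' : ℝ} (ha : 1 ≤ a) (hb : 1 ≤ b) (ha' : a ≤ a') (hb' : b ≤ b')
    (k : ℕ) : Nseq a b k ≤ Nseq a' b' k := by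
  apply Nseq_le_of_mem ha hb
  have hsub : Sset a' b' (Nseq a' b' k) ⊆ Sset a b (Nseq a' b' k) := by
    intro p hp
    simp only [Sset, Set.mem_setOf_eq] at hp ⊢
    refine le_trans ?_ hp
    have := Nat.cast_nonneg (α := ℝ) p.1
    have := Nat.cast_nonneg (α := ℝ) p.2
    nlinarith
  have h2 := Set.ncard_le_ncard hsub (Sset_finite ha hb _)
  have h1 := Nseq_mem (le_trans ha ha') (le_trans hb hb') k
  simp only [Tset, Set.mem_setOf_eq, Fc] at *
  omega

/-- Triangle numbers via the lattice count. -/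
lemma tri_count (d : ℕ) :
    2 * Set.ncard {p : ℕ × ℕ | p.1 + p.2 ≤ d} = (d + 1) * (d + 2) := by
  have hset : {p : ℕ × ℕ | p.1 + p.2 ≤ d} =
      ↑((Finset.range (d+1)).biUnion fun s => Finset.HasAntidiagonal.antidiagonal s) := by
    ext ⟨m, n⟩
    simp only [Set.mem_setOf_eq, Finset.mem_coe, Finset.mem_biUnion, Finset.mem_range,
      Finset.HasAntidiagonal.mem_antidiagonal]
    constructor
    · intro h; exact ⟨m + n, by omega, rfl⟩
    · rintro ⟨s, hs, rfl⟩; omega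
  rw [hset, Set.ncard_coe_finset]
  rw [Finset.card_biUnion]
  · have h1 : ∑ s ∈ Finset.range (d+1), (Finset.HasAntidiagonal.antidiagonal s).card
        = ∑ s ∈ Finset.range (d+1), (s + 1) :=
      Finset.sum_congr rfl fun s _ => Finset.Nat.card_antidiagonal s
    have h2 : ∑ s ∈ Finset.range (d+2), s = ∑ s ∈ Finset.range (d+1), (s+1) := by
      rw [Finset.sum_range_succ']; omega
    have h3 := Finset.sum_range_id_mul_two (d+2)
    have h4 : (d + 2) - 1 = d + 1 := rfl
    rw [h4] at h3
    calc 2 * ∑ s ∈ Finset.range (d+1), (Finset.HasAntidiagonal.antidiagonal s).card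
        = (∑ s ∈ Finset.range (d+2), s) * 2 := by rw [h1, h2]; ring
      _ = (d + 2) * (d + 1) := h3
      _ = (d + 1) * (d + 2) := by ring
  · intro x _ y _ hxy
    simp only [Finset.disjoint_left, Finset.HasAntidiagonal.mem_antidiagonal]
    intro p hp hq
    omega

/-- `δ(k)` : the minimal `d ≥ 0` with `(d+1)(d+2) ≥ 2(k+1)`. -/
noncomputable def del (k : ℕ) : ℕ := sInf {d : ℕ | 2 * (k + 1) ≤ (d + 1) * (d + 2)}

lemma del_set_nonempty (k : ℕ) : {d : ℕ | 2 * (k + 1) ≤ (d + 1) * (d + 2)}.Nonempty :=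
  ⟨k, by simp only [Set.mem_setOf_eq]; nlinarith⟩

lemma del_spec (k : ℕ) : 2 * (k + 1) ≤ (del k + 1) * (del k + 2) :=
  Nat.sInf_mem (del_set_nonempty k)

lemma del_min {k d : ℕ} (h : d < del k) : (d + 1) * (d + 2) < 2 * (k + 1) := by
  have := Nat.notMem_of_lt_sInf h
  simp only [Set.mem_setOf_eq, not_le] at this
  exact this

lemma del_zero : del 0 = 0 := by
  have : 0 ∈ {d : ℕ | 2 * (0 + 1) ≤ (d + 1) * (d + 2)} := by norm_num
  exact le_antisymm (Nat.sInf_le this) (Nat.zero_le _)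

lemma del_pos {k : ℕ} (hk : 1 ≤ k) : 1 ≤ del k := by
  have h := del_spec k
  rcases Nat.eq_zero_or_pos (del k) with h0 | h0
  · rw [h0] at h; norm_num at h; omega
  · exact h0

lemma del_one : del 1 = 1 := by
  have h1 : 1 ≤ del 1 := del_pos le_rfl
  have h2 : 1 ∈ {d : ℕ | 2 * (1 + 1) ≤ (d + 1) * (d + 2)} := by norm_num
  have h3 : del 1 ≤ 1 := Nat.sInf_le h2
  omega

lemma Sset_one_one (t : ℝ) (ht : 0 ≤ t) :
    Sset 1 1 t = {p : ℕ × ℕ | p.1 + p.2 ≤ Nat.floor t} := by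
  ext p
  simp only [Sset, Set.mem_setOf_eq, mul_one]
  rw [← Nat.cast_add, Nat.le_floor_iff ht]

lemma Fc_one_one_nat (d : ℕ) : 2 * Fc 1 1 (d : ℝ) = (d + 1) * (d + 2) := by
  rw [Fc, Sset_one_one _ (Nat.cast_nonneg d), Nat.floor_natCast]
  exact tri_count d

lemma Nseq_one_one (k : ℕ) : Nseq 1 1 k = (del k : ℝ) := by
  apply le_antisymm
  · apply Nseq_le_of_mem le_rfl le_rfl
    show k + 1 ≤ Fc 1 1 (del k : ℝ)
    have h1 := Fc_one_one_nat (del k)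
    have h2 := del_spec k
    omega
  · apply le_Nseq_of_lb le_rfl le_rfl
    intro t ht
    by_contra hc
    push_neg at hc
    have ht0 : 0 ≤ t := Tset_subset_Ici zero_le_one zero_le_one k ht
    set n := Nat.floor t with hn
    have hnt : (n : ℝ) ≤ t := Nat.floor_le ht0
    have hnd : n < del k := by
      have : (n : ℝ) < (del k : ℝ) := lt_of_le_of_lt hnt hc
      exact_mod_cast this
    have hFt : Fc 1 1 t = Fc 1 1 (n : ℝ) := by
      have hss : Sset 1 1 t = Sset 1 1 (n : ℝ) := by
        rw [Sset_one_one _ ht0, Sset_one_one _ (Nat.cast_nonneg n), Nat.floor_natCast]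
      rw [Fc, hss, Fc]
    have h1 := Fc_one_one_nat n
    have h2 := del_min hnd
    have h3 : (k:ℕ) + 1 ≤ Fc 1 1 t := ht
    omega

lemma Nseq_smul {mu : ℝ} (hmu : 0 < mu) (k : ℕ) : Nseq mu mu k = mu * (del k : ℝ) := by
  have hset : ∀ t : ℝ, Sset mu mu t = Sset 1 1 (t / mu) := by
    intro t
    ext p
    simp only [Sset, Set.mem_setOf_eq, mul_one]
    rw [le_div_iff₀ hmu]
    constructor <;> intro h <;> nlinarith
  have hT : Tset mu mu k = {t : ℝ | t / mu ∈ Tset 1 1 k} := by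
    ext t
    simp only [Tset, Set.mem_setOf_eq, Fc, hset]
  have hT2 : Tset mu mu k = Set.Ici (mu * (del k : ℝ)) := by
    rw [hT, Tset_eq_Ici le_rfl le_rfl, Nseq_one_one]
    ext t
    simp only [Set.mem_setOf_eq, Set.mem_Ici]
    rw [le_div_iff₀ hmu]
    constructor <;> intro h <;> nlinarith
  rw [Nseq_eq, hT2, csInf_Ici]

noncomputable def gfun (a : ℝ) (k : ℕ) : ℝ := Nseq 1 a k / (del k : ℝ)

lemma Nseq_zero {a b : ℝ} (ha : 1 ≤ a) (hb : 1 ≤ b) : Nseq a b 0 = 0 := by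
  apply le_antisymm
  · apply Nseq_le_of_mem ha hb
    show 0 + 1 ≤ Fc a b 0
    have h : ({((0:ℕ),(0:ℕ))} : Set (ℕ × ℕ)) ⊆ Sset a b 0 := by
      intro p hp
      simp only [Set.mem_singleton_iff] at hp
      subst hp
      simp [Sset]
    have := Set.ncard_le_ncard h (Sset_finite ha hb 0)
    simpa [Fc] using this
  · exact Nseq_nonneg ha hb 0

lemma gfun_zero (a : ℝ) : gfun a 0 = 0 := by
  simp [gfun, del_zero]

lemma Nseq_one_ge_one {a : ℝ} (ha : 1 ≤ a) : 1 ≤ Nseq 1 a 1 := by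
  apply le_Nseq_of_lb le_rfl ha
  intro t ht
  by_contra hc
  push_neg at hc
  have hsub : Sset 1 a t ⊆ {((0:ℕ),(0:ℕ))} := by
    rintro ⟨m, n⟩ hp
    simp only [Sset, Set.mem_setOf_eq, mul_one] at hp
    simp only [Set.mem_singleton_iff, Prod.ext_iff]
    constructor
    · by_contra hm
      have : (1:ℝ) ≤ (m:ℝ) := by exact_mod_cast Nat.one_le_iff_ne_zero.mpr hm
      have := Nat.cast_nonneg (α := ℝ) n
      nlinarith
    · by_contra hn
      have : (1:ℝ) ≤ (n:ℝ) := by exact_mod_cast Nat.one_le_iff_ne_zero.mpr hn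
      have := Nat.cast_nonneg (α := ℝ) m
      nlinarith
  have := Set.ncard_le_ncard hsub (Set.finite_singleton _)
  simp only [Set.ncard_singleton] at this
  have h2 : (1:ℕ) + 1 ≤ Fc 1 a t := ht
  simp only [Fc] at h2
  omega

lemma gfun_le {a : ℝ} (ha : 1 < a) (k : ℕ) : gfun a k ≤ a := by
  rcases Nat.eq_zero_or_pos k with rfl | hk
  · rw [gfun_zero]; linarith
  · have hdel : (1:ℝ) ≤ (del k : ℝ) := by exact_mod_cast del_pos hk
    have h1 : Nseq 1 a k ≤ Nseq a a k := Nseq_mono_coeff le_rfl ha.le ha.le le_rfl k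
    rw [Nseq_smul (by linarith : (0:ℝ) < a)] at h1
    rw [gfun, div_le_iff₀ (by linarith)]
    nlinarith [Nseq_nonneg (le_rfl : (1:ℝ) ≤ 1) ha.le k]

lemma gfun_nonneg {a : ℝ} (ha : 1 ≤ a) (k : ℕ) : 0 ≤ gfun a k :=
  div_nonneg (Nseq_nonneg le_rfl ha k) (Nat.cast_nonneg _)

lemma gfun_bdd {a : ℝ} (ha : 1 < a) : BddAbove (Set.range (gfun a)) :=
  ⟨a, by rintro x ⟨k, rfl⟩; exact gfun_le ha k⟩

lemma one_le_iSup_gfun {a : ℝ} (ha : 1 < a) : 1 ≤ ⨆ k, gfun a k := by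
  have h1 : gfun a 1 = Nseq 1 a 1 := by
    rw [gfun, del_one]; simp
  have := Nseq_one_ge_one ha.le
  calc (1:ℝ) ≤ gfun a 1 := by rw [h1]; exact this
  _ ≤ ⨆ k, gfun a k := le_ciSup (gfun_bdd ha) 1

lemma Nseq_le_mul_del {a : ℝ} (ha : 1 < a) {x : ℝ} (hx : ∀ k, gfun a k ≤ x) (k : ℕ) :
    Nseq 1 a k ≤ x * (del k : ℝ) := by
  rcases Nat.eq_zero_or_pos k with rfl | hk
  · rw [Nseq_zero le_rfl ha.le, del_zero]; simp
  · have hdel : (0:ℝ) < (del k : ℝ) := by exact_mod_cast del_pos hk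
    have := hx k
    rw [gfun, div_le_iff₀ hdel] at this
    exact this

lemma cECH_eq_iSup {a : ℝ} (ha : 1 < a) : cECH a = ⨆ k, gfun a k := by
  set G := ⨆ k, gfun a k with hG
  have hG1 : 1 ≤ G := one_le_iSup_gfun ha
  have hGmem : G ∈ {μ : ℝ | 0 < μ ∧ ∀ k : ℕ, Nseq 1 a k ≤ Nseq μ μ k} := by
    constructor
    · linarith
    · intro k
      rw [Nseq_smul (by linarith : (0:ℝ) < G)]
      exact Nseq_le_mul_del ha (fun k => le_ciSup (gfun_bdd ha) k) k
  apply le_antisymm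
  · exact csInf_le ⟨0, fun μ hμ => hμ.1.le⟩ hGmem
  · apply le_csInf ⟨G, hGmem⟩
    rintro μ ⟨hμ0, hμ⟩
    apply ciSup_le
    intro k
    rcases Nat.eq_zero_or_pos k with rfl | hk
    · rw [gfun_zero]; linarith
    · have hdel : (0:ℝ) < (del k : ℝ) := by exact_mod_cast del_pos hk
      have := hμ k
      rw [Nseq_smul hμ0] at this
      rw [gfun, div_le_iff₀ hdel]
      linarith

lemma latticeCount_eq (a : ℝ) (A B : ℕ) :
    latticeCount a A B = Fc 1 a ((A : ℝ) + (B : ℝ) * a) := by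
  rw [latticeCount, Fc]
  congr 1
  ext p
  simp only [Sset, Set.mem_setOf_eq, mul_one]
  constructor <;> intro h <;> nlinarith

/-- If `latticeCount ≥ 2`, then `dAB = del (L - 1)` and `Nseq 1 a (L-1) = A + B a`. -/
lemma dAB_eq_del {a : ℝ} {L : ℕ} (hL : 2 ≤ L) (A B : ℕ) (hcount : latticeCount a A B = L) :
    dAB a A B = del (L - 1) := by
  rw [dAB, del, hcount]
  congr 1
  ext d
  simp only [Set.mem_setOf_eq]
  constructor
  · rintro ⟨-, h⟩
    have : L - 1 + 1 = L := by omega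
    rw [this]
    exact h
  · intro h
    have hLL : L - 1 + 1 = L := by omega
    rw [hLL] at h
    refine ⟨?_, h⟩
    by_contra hd
    push_neg at hd
    interval_cases d
    omega

lemma Nseq_eq_of_count {a : ℝ} (ha : 1 < a) {A B : ℕ} {L : ℕ} (hL : 1 ≤ L)
    (hcount : latticeCount a A B = L) :
    Nseq 1 a (L - 1) = (A : ℝ) + (B : ℝ) * a := by
  set t := (A : ℝ) + (B : ℝ) * a with htt
  have hFt : Fc 1 a t = L := by rw [← latticeCount_eq a A B]; exact hcount
  have hmemAB : ((A, B) : ℕ × ℕ) ∈ Sset 1 a t := by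
    simp [Sset, htt]
  apply le_antisymm
  · apply Nseq_le_of_mem le_rfl ha.le
    show (L - 1) + 1 ≤ Fc 1 a t
    omega
  · apply le_Nseq_of_lb le_rfl ha.le
    intro u hu
    by_contra hc
    push_neg at hc
    -- u < t, so S(u) ⊆ S(t) \ {(A,B)}
    have hsub : Sset 1 a u ⊆ Sset 1 a t \ {((A : ℕ), (B : ℕ))} := by
      intro p hp
      simp only [Sset, Set.mem_setOf_eq, mul_one] at hp
      constructor
      · show (p.1:ℝ) * 1 + (p.2:ℝ) * a ≤ t
        simp only [mul_one]
        linarith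
      · simp only [Set.mem_singleton_iff]
        intro he
        rw [he] at hp
        simp only [mul_one] at hp
        nlinarith
    have hdiff : (Sset 1 a t \ {((A : ℕ), (B : ℕ))}).ncard = L - 1 := by
      rw [Set.ncard_diff_singleton_of_mem hmemAB]
      rw [show (Sset 1 a t).ncard = L from hFt]
    have hle := Set.ncard_le_ncard hsub ((Sset_finite le_rfl ha.le t).subset Set.diff_subset)
    rw [hdiff] at hle
    have h2 : (L - 1) + 1 ≤ Fc 1 a u := hu
    simp only [Fc] at h2
    omega

lemma kAB_le_iSup_gfun {a : ℝ} (ha : 1 < a) (A B : ℕ) : kAB a A B ≤ ⨆ k, gfun a k := by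
  by_cases hAB : A = 0 ∧ B = 0
  · obtain ⟨rfl, rfl⟩ := hAB
    have : kAB a 0 0 = 0 := by simp [kAB]
    rw [this]
    linarith [one_le_iSup_gfun ha]
  · set L := latticeCount a A B with hLdef
    have hL2 : 2 ≤ L := by
      have hsub : ({((0:ℕ),(0:ℕ)), (A, B)} : Set (ℕ × ℕ)) ⊆
          {p : ℕ × ℕ | (p.1 : ℝ) + a * (p.2 : ℝ) ≤ (A : ℝ) + a * (B : ℝ)} := by
        rintro p (hp | hp)
        · simp only [hp, Set.mem_setOf_eq, Nat.cast_zero, mul_zero, add_zero]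
          positivity
        · simp only [Set.mem_singleton_iff] at hp
          simp [hp]
      have hne : ((0:ℕ),(0:ℕ)) ≠ (A, B) := by
        simp only [Ne, Prod.ext_iff, not_and]
        intro h1 h2
        exact hAB ⟨h1.symm ▸ rfl, h2.symm ▸ rfl⟩
      have hfin : {p : ℕ × ℕ | (p.1 : ℝ) + a * (p.2 : ℝ) ≤ (A : ℝ) + a * (B : ℝ)}.Finite := by
        have := Sset_finite (le_refl (1:ℝ)) ha.le ((A : ℝ) + (B : ℝ) * a)
        apply Set.Finite.subset this
        intro p hp
        simp only [Set.mem_setOf_eq] at hp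
        simp only [Sset, Set.mem_setOf_eq, mul_one]
        nlinarith
      have := Set.ncard_le_ncard hsub hfin
      rw [Set.ncard_pair hne] at this
      exact this
    have hNs := Nseq_eq_of_count ha (by omega : 1 ≤ L) hLdef.symm
    have hd := dAB_eq_del hL2 A B hLdef.symm
    have : kAB a A B = gfun a (L - 1) := by
      rw [kAB, gfun, hd, hNs]
    rw [this]
    exact le_ciSup (gfun_bdd ha) (L - 1)

lemma vfun_injective {a : ℝ} (hirr : Irrational a) :
    Function.Injective (vfun 1 a) := by
  rintro ⟨m, n⟩ ⟨m', n'⟩ h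
  simp only [vfun, mul_one] at h
  by_cases hnn : n = n'
  · subst hnn
    have : (m : ℝ) = (m' : ℝ) := by linarith
    have : m = m' := by exact_mod_cast this
    simp [this]
  · exfalso
    have hne : ((n' : ℝ)) - (n : ℝ) ≠ 0 := by
      intro hz
      apply hnn
      have : (n : ℝ) = (n' : ℝ) := by linarith
      exact_mod_cast this
    have ha_eq : a = ((m : ℝ) - (m' : ℝ)) / ((n' : ℝ) - (n : ℝ)) := by
      field_simp
      linarith
    apply hirr
    refine ⟨((m : ℚ) - (m' : ℚ)) / ((n' : ℚ) - (n : ℚ)), ?_⟩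
    rw [ha_eq]
    push_cast
    ring

lemma gfun_le_Kirr {a : ℝ} (ha : 1 < a) (hirr : Irrational a)
    (hbddK : BddAbove (Set.range fun p : ℕ × ℕ => kAB a p.1 p.2)) (k : ℕ) :
    gfun a k ≤ Kirr a := by
  rcases Nat.eq_zero_or_pos k with rfl | hk
  · rw [gfun_zero]
    have : kAB a 0 0 = 0 := by simp [kAB]
    calc (0:ℝ) = kAB a 0 0 := this.symm
    _ ≤ Kirr a := le_ciSup hbddK ((0,0) : ℕ × ℕ)
  · set t := Nseq 1 a k with htdef
    obtain ⟨hmem, p, hp⟩ := Nseq_spec (le_refl (1:ℝ)) ha.le k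
    -- L = Fc 1 a t
    have hub : Fc 1 a t ≤ k + 1 := by
      have hpS : p ∈ Sset 1 a t := by rw [mem_Sset_iff, hp]
      set S0 := Sset 1 a t \ {p} with hS0
      have hcard : Fc 1 a t = S0.ncard + 1 := by
        rw [hS0, Set.ncard_diff_singleton_of_mem hpS]
        have hpos : 1 ≤ (Sset 1 a t).ncard := by
          exact (Set.ncard_pos (Sset_finite le_rfl ha.le t)).mpr ⟨p, hpS⟩
        simp only [Fc]
        omega
      have hS0card : S0.ncard ≤ k := by
        rcases Set.eq_empty_or_nonempty S0 with h0 | h0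
        · simp [h0]
        · have hS0fin : S0.Finite := (Sset_finite le_rfl ha.le t).subset Set.diff_subset
          obtain ⟨q, hq, hqmax⟩ := Set.Finite.exists_maximalFor (vfun 1 a) _ hS0fin h0
          have hqlt : vfun 1 a q < t := by
            rcases lt_or_eq_of_le (mem_Sset_iff.mp hq.1) with h | h
            · exact h
            · exfalso
              have : q = p := vfun_injective hirr (by rw [h, hp])
              exact hq.2 (by simp [this])
          have hsub2 : S0 ⊆ Sset 1 a (vfun 1 a q) := by
            intro r hr
            rcases le_or_gt (vfun 1 a r) (vfun 1 a q) with h | h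
            · exact h
            · exact hqmax hr h.le
          have := Set.ncard_le_ncard hsub2 (Sset_finite le_rfl ha.le _)
          have hFq : Fc 1 a (vfun 1 a q) ≤ k := Fc_le_of_lt_Nseq le_rfl ha.le hqlt
          simp only [Fc] at hFq this
          omega
      omega
    have hL : Fc 1 a t = k + 1 := le_antisymm hub hmem
    -- now produce (A, B)
    set A := p.1 with hA
    set B := p.2 with hB
    have htp : t = (A : ℝ) + (B : ℝ) * a := by
      rw [htdef, ← hp]; simp [vfun, hA, hB]
    have hcount : latticeCount a A B = k + 1 := by
      rw [latticeCount_eq, ← htp, hL]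
    have hd := dAB_eq_del (by omega : 2 ≤ k + 1) A B hcount
    have hsimp : (k + 1) - 1 = k := by omega
    rw [hsimp] at hd
    have : kAB a A B = gfun a k := by
      rw [kAB, gfun, hd, ← htp]
    calc gfun a k = kAB a A B := this.symm
    _ ≤ Kirr a := le_ciSup hbddK (p : ℕ × ℕ)

lemma Kirr_eq_cECH {a : ℝ} (ha : 1 < a) (hirr : Irrational a) : Kirr a = cECH a := by
  rw [cECH_eq_iSup ha]
  have hbddK : BddAbove (Set.range fun p : ℕ × ℕ => kAB a p.1 p.2) := by
    refine ⟨⨆ k, gfun a k, ?_⟩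
    rintro x ⟨p, rfl⟩
    exact kAB_le_iSup_gfun ha p.1 p.2
  apply le_antisymm
  · exact ciSup_le fun p => kAB_le_iSup_gfun ha p.1 p.2
  · exact ciSup_le fun k => gfun_le_Kirr ha hirr hbddK k

lemma Nseq_approx {z a : ℝ} (hz : 1 ≤ z) (hza : z ≤ a) (k : ℕ) :
    Nseq 1 a k ≤ (1 + (a - z)) * Nseq 1 z k := by
  have hpos : (0:ℝ) < 1 + (a - z) := by linarith
  have h1 : ∀ t ∈ Tset 1 z k, Nseq 1 a k ≤ (1 + (a - z)) * t := by
    intro t ht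
    have ht0 : 0 ≤ t := Tset_subset_Ici zero_le_one (by linarith) k ht
    have hsub : Sset 1 z t ⊆ Sset 1 a ((1 + (a - z)) * t) := by
      rintro ⟨m, n⟩ hp
      simp only [Sset, Set.mem_setOf_eq, mul_one] at hp ⊢
      have hm0 := Nat.cast_nonneg (α := ℝ) m
      have hn0 := Nat.cast_nonneg (α := ℝ) n
      have hnt : (n : ℝ) ≤ t := by nlinarith
      nlinarith
    have hmem : (1 + (a - z)) * t ∈ Tset 1 a k := by
      have h2 := Set.ncard_le_ncard hsub (Sset_finite le_rfl (by linarith) _)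
      have h3 : (k:ℕ) + 1 ≤ Fc 1 z t := ht
      show (k:ℕ) + 1 ≤ Fc 1 a _
      simp only [Fc] at h2 h3 ⊢
      omega
    exact Nseq_le_of_mem le_rfl (by linarith) hmem
  have h2 : Nseq 1 a k / (1 + (a - z)) ≤ Nseq 1 z k := by
    apply le_Nseq_of_lb le_rfl hz
    intro t ht
    rw [div_le_iff₀' hpos]
    exact h1 t ht
  rw [div_le_iff₀' hpos] at h2
  linarith [h2]

lemma gfun_mono_coeff {z a : ℝ} (hz : 1 ≤ z) (hza : z ≤ a) (k : ℕ) :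
    gfun z k ≤ gfun a k := by
  rcases Nat.eq_zero_or_pos k with rfl | hk
  · rw [gfun_zero, gfun_zero]
  · have hdel : (0:ℝ) < (del k : ℝ) := by exact_mod_cast del_pos hk
    have := Nseq_mono_coeff le_rfl hz le_rfl hza k
    unfold gfun
    gcongr

lemma rational_case {a : ℝ} (ha : 1 < a) :
    sSup {x : ℝ | ∃ z : ℝ, Irrational z ∧ 1 < z ∧ z < a ∧ x = Kirr z} = ⨆ k, gfun a k := by
  set SS := {x : ℝ | ∃ z : ℝ, Irrational z ∧ 1 < z ∧ z < a ∧ x = Kirr z} with hSS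
  have hbound : ∀ x ∈ SS, x ≤ ⨆ k, gfun a k := by
    rintro x ⟨z, hzirr, h1z, hza, rfl⟩
    rw [Kirr_eq_cECH h1z hzirr, cECH_eq_iSup h1z]
    exact ciSup_le fun k => (gfun_mono_coeff h1z.le hza.le k).trans (le_ciSup (gfun_bdd ha) k)
  have hbdd : BddAbove SS := ⟨_, hbound⟩
  have hne : SS.Nonempty := by
    obtain ⟨z, hzirr, h1z, hza⟩ := exists_irrational_btwn ha
    exact ⟨Kirr z, z, hzirr, h1z, hza, rfl⟩
  apply le_antisymm
  · exact csSup_le hne hbound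
  · apply ciSup_le
    intro k
    rcases Nat.eq_zero_or_pos k with rfl | hk
    · rw [gfun_zero]
      obtain ⟨x, hx⟩ := hne
      obtain ⟨z, hzirr, h1z, hza, rfl⟩ := hx
      have h1 : (1:ℝ) ≤ Kirr z := by
        rw [Kirr_eq_cECH h1z hzirr, cECH_eq_iSup h1z]
        exact one_le_iSup_gfun h1z
      have := le_csSup hbdd (⟨z, hzirr, h1z, hza, rfl⟩ : Kirr z ∈ SS)
      linarith
    · apply le_of_forall_pos_le_add
      intro ε hε
      have ha0 : (0:ℝ) < a := by linarith
      set Δ := min (ε / a) ((a - 1) / 2) with hΔ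
      have hΔ0 : 0 < Δ := lt_min (div_pos hε ha0) (by linarith)
      have hΔa : Δ ≤ ε / a := min_le_left _ _
      have hΔ2 : Δ ≤ (a - 1) / 2 := min_le_right _ _
      have hl : a - Δ < a := by linarith
      obtain ⟨z, hzirr, hz1, hz2⟩ := exists_irrational_btwn hl
      have hz1' : 1 < z := by
        have : (a + 1) / 2 ≤ a - Δ := by linarith
        linarith
      have happrox := Nseq_approx hz1'.le hz2.le k
      have hdel : (0:ℝ) < (del k : ℝ) := by exact_mod_cast del_pos hk
      have e1 : gfun a k ≤ (1 + (a - z)) * gfun z k := by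
        rw [gfun, gfun, ← mul_div_assoc]
        gcongr
      have hK : Kirr z ∈ SS := ⟨z, hzirr, hz1', hz2, rfl⟩
      have hgz : gfun z k ≤ Kirr z := by
        rw [Kirr_eq_cECH hz1' hzirr, cECH_eq_iSup hz1']
        exact le_ciSup (gfun_bdd hz1') k
      have hKle : Kirr z ≤ sSup SS := le_csSup hbdd hK
      have hgle : gfun z k ≤ a := (gfun_le hz1' k).trans hz2.le
      have hg0 : 0 ≤ gfun z k := gfun_nonneg hz1'.le k
      have h6 : Δ * a ≤ ε := by
        have := mul_le_mul_of_nonneg_right hΔa ha0.le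
        rwa [div_mul_cancel₀ _ ha0.ne'] at this
      have h5 : (a - z) * gfun z k ≤ Δ * a := by nlinarith
      calc gfun a k ≤ (1 + (a - z)) * gfun z k := e1
        _ = gfun z k + (a - z) * gfun z k := by ring
        _ ≤ sSup SS + ε := by linarith [hgz.trans hKle]

end LP

/-- **Lemma 2.21 (lem:ECH).** `K(a) = c_ECH(a)` for all `a > 1`. -/
theorem stmt_7 (a : ℝ) (ha : 1 < a) : Kcap a = cECH a := by
  by_cases hirr : Irrational a
  · rw [Kcap, if_pos hirr]
    exact LP.Kirr_eq_cECH ha hirr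
  · rw [Kcap, if_neg hirr, LP.cECH_eq_iSup ha]
    exact LP.rational_case ha
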